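/- Let A be a real unital Banach algebra and a : [0,1] → A continuous. For t ∈ [0,1] define H_t := 1 + Σ_{n≥1} ∫_{t ≥ t_1 ≥ … ≥ t_n ≥ 0} a(1−t_1)·a(1−t_2)·…·a(1−t_n) dt_1⋯dt_n, where each term is a Bochner integral over {(t_1,…,t_n) ∈ ℝ^n : t ≥ t_1 ≥ … ≥ t_n ≥ 0}. Then the series converges absolutely for every t ∈ [0,1], H_0 = 1, and the map t ↦ H_t is differentiable on [0,1] with H′(t) = a(1−t)·H_t. In particular, H_1 is the parallel transport, i.e. the time-1 value of the solution of the linear ODE X′(t) = a(1−t)·X(t) with X(0) = 1. -/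

import Mathlib

noncomputable section
set_option linter.unusedSectionVars false
set_option maxHeartbeats 1000000
open MeasureTheory Set Filter Topology

/-- The ordered set `{t ∈ ℝ^n : c ≥ t_1 ≥ … ≥ t_n ≥ b}`. -/
def ordSet (n : ℕ) (b c : ℝ) : Set (Fin n → ℝ) :=
  {t | (∀ i, b ≤ t i ∧ t i ≤ c) ∧ ∀ i j : Fin n, i ≤ j → t j ≤ t i}

/-- `H_t := 1 + Σ_{n≥1} ∫_{t ≥ t_1 ≥ … ≥ t_n ≥ 0} a(1−t_1)·…·a(1−t_n) dt`. -/
def Hmap {A : Type*} [NormedRing A] [NormedAlgebra ℝ A] [CompleteSpace A]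
    (a : ℝ → A) (t : ℝ) : A :=
  1 + ∑' n : ℕ, ∫ x in ordSet (n + 1) 0 t, (List.ofFn fun i : Fin (n + 1) => a (1 - x i)).prod

namespace Stmt10Aux

variable {A : Type*} [NormedRing A] [NormedAlgebra ℝ A] [CompleteSpace A]

def P (b : ℝ → A) (n : ℕ) (x : Fin n → ℝ) : A := (List.ofFn fun i : Fin n => b (1 - x i)).prod

def F (b : ℝ → A) (n : ℕ) (t : ℝ) : A := ∫ x in ordSet n 0 t, P b n x

lemma continuous_P {b : ℝ → A} (hb : Continuous b) (n : ℕ) : Continuous (P b n) := by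
  have : P b n = fun x => ((List.finRange n).map fun i => b (1 - x i)).prod := by
    funext x; simp [P, List.ofFn_eq_map]
  rw [this]
  exact continuous_list_prod _ fun i _ => hb.comp (continuous_const.sub (continuous_apply i))

lemma isClosed_ordSet (n : ℕ) (c : ℝ) : IsClosed (ordSet n 0 c) := by
  have : ordSet n 0 c =
      (⋂ i, {x : Fin n → ℝ | 0 ≤ x i} ∩ {x | x i ≤ c}) ∩
      ⋂ (i) (j) (_ : i ≤ j), {x : Fin n → ℝ | x j ≤ x i} := by
    ext x; simp only [ordSet, mem_setOf_eq, mem_inter_iff, mem_iInter, mem_setOf_eq]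
  rw [this]
  exact (isClosed_iInter fun i =>
      ((isClosed_le continuous_const (continuous_apply i)).inter
        (isClosed_le (continuous_apply i) continuous_const))).inter
    (isClosed_iInter fun i => isClosed_iInter fun j => isClosed_iInter fun _ =>
      isClosed_le (continuous_apply j) (continuous_apply i))

lemma isCompact_ordSet (n : ℕ) (c : ℝ) : IsCompact (ordSet n 0 c) := by
  refine IsCompact.of_isClosed_subset (isCompact_Icc (a := (fun _ => 0 : Fin n → ℝ))
    (b := fun _ => c)) (isClosed_ordSet n c) ?_
  intro x hx
  exact ⟨fun i => (hx.1 i).1, fun i => (hx.1 i).2⟩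

lemma F_zero (b : ℝ → A) (t : ℝ) : F b 0 t = 1 := by
  have h1 : ordSet 0 0 t = univ := by ext x; simp [ordSet]
  have h2 : P b 0 = fun _ => (1 : A) := by funext x; simp [P]
  rw [F, h1, h2, Measure.restrict_univ, integral_const]
  have : (volume : Measure (Fin 0 → ℝ)) univ = 1 := by
    rw [volume_pi]
    simp
  rw [measureReal_def, this]
  simp

lemma mem_ordSet_succ_iff {n : ℕ} {t : ℝ} {x : Fin (n + 1) → ℝ} :
    x ∈ ordSet (n + 1) 0 t ↔
      (0 ≤ x 0 ∧ x 0 ≤ t) ∧ (fun j : Fin n => x j.succ) ∈ ordSet n 0 (x 0) := by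
  constructor
  · rintro ⟨h1, h2⟩
    exact ⟨h1 0, ⟨fun j => ⟨(h1 j.succ).1, h2 0 j.succ (Fin.zero_le _)⟩,
      fun i j hij => h2 i.succ j.succ (Fin.succ_le_succ_iff.mpr hij)⟩⟩
  · rintro ⟨⟨h0, h0'⟩, ⟨h1, h2⟩⟩
    constructor
    · intro i
      refine Fin.cases ⟨h0, h0'⟩ (fun j => ⟨(h1 j).1, le_trans (h1 j).2 h0'⟩) i
    · intro i j hij
      induction j using Fin.cases with
      | zero =>
        have : i = 0 := le_antisymm (by exact_mod_cast hij) (Fin.zero_le _)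
        simp [this]
      | succ j =>
        induction i using Fin.cases with
        | zero => exact (h1 j).2
        | succ i => exact h2 i j (Fin.succ_le_succ_iff.mp hij)

lemma F_succ (b : ℝ → A) (hb : Continuous b) (n : ℕ) {t : ℝ} (ht : 0 ≤ t) :
    F b (n + 1) t = ∫ s in (0:ℝ)..t, b (1 - s) * F b n s := by
  classical
  set T : Set (ℝ × (Fin n → ℝ)) := {p | (0 ≤ p.1 ∧ p.1 ≤ t) ∧ p.2 ∈ ordSet n 0 p.1} with hT
  set g : ℝ × (Fin n → ℝ) → A := fun p => b (1 - p.1) * P b n p.2 with hg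
  have hTclosed : IsClosed T := by
    have : T = ({p : ℝ × (Fin n → ℝ) | 0 ≤ p.1} ∩ {p | p.1 ≤ t}) ∩
        ((⋂ i, {p : ℝ × (Fin n → ℝ) | 0 ≤ p.2 i} ∩ {p | p.2 i ≤ p.1}) ∩
          ⋂ (i) (j) (_ : i ≤ j), {p : ℝ × (Fin n → ℝ) | p.2 j ≤ p.2 i}) := by
      ext p
      simp only [hT, ordSet, mem_setOf_eq, mem_inter_iff, mem_iInter, mem_setOf_eq]
      try tauto
    rw [this]
    have c2 : ∀ i : Fin n, Continuous fun p : ℝ × (Fin n → ℝ) => p.2 i :=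
      fun i => (continuous_apply i).comp continuous_snd
    exact ((isClosed_le continuous_const continuous_fst).inter
        (isClosed_le continuous_fst continuous_const)).inter
      (((isClosed_iInter fun i => (isClosed_le continuous_const (c2 i)).inter
          (isClosed_le (c2 i) continuous_fst))).inter
        (isClosed_iInter fun i => isClosed_iInter fun j => isClosed_iInter fun _ =>
          isClosed_le (c2 j) (c2 i)))
  have hTcomp : IsCompact T := by
    refine IsCompact.of_isClosed_subset
      (isCompact_Icc (a := ((0 : ℝ), (fun _ => 0 : Fin n → ℝ))) (b := (t, fun _ => t)))
      hTclosed ?_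
    rintro ⟨s, y⟩ ⟨⟨hs0, hst⟩, hy⟩
    refine ⟨⟨hs0, fun i => (hy.1 i).1⟩, ⟨hst, fun i => le_trans (hy.1 i).2 hst⟩⟩
  have hgc : Continuous g :=
    (hb.comp (continuous_const.sub continuous_fst)).mul ((continuous_P hb n).comp continuous_snd)
  have hint : Integrable (T.indicator g) := by
    rw [integrable_indicator_iff hTclosed.measurableSet]
    exact hgc.continuousOn.integrableOn_compact hTcomp
  set e := MeasurableEquiv.piFinSuccAbove (fun _ : Fin (n + 1) => ℝ) 0 with he
  have e_apply : ∀ x : Fin (n + 1) → ℝ, e x = (x 0, fun j : Fin n => x j.succ) := by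
    intro x
    refine Prod.ext rfl ?_
    funext j
    simp [he, MeasurableEquiv.piFinSuccAbove, Fin.removeNth, Fin.succAbove, Fin.tail]
  have key : ∀ x : Fin (n + 1) → ℝ,
      (ordSet (n + 1) 0 t).indicator (P b (n + 1)) x = T.indicator g (e x) := by
    intro x
    rw [e_apply]
    by_cases hx : x ∈ ordSet (n + 1) 0 t
    · rw [indicator_of_mem hx,
        indicator_of_mem (show (x 0, fun j : Fin n => x j.succ) ∈ T from
          mem_ordSet_succ_iff.mp hx)]
      show P b (n + 1) x = b (1 - x 0) * P b n fun j => x j.succ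
      simp [P, List.ofFn_succ]
    · rw [indicator_of_notMem hx, indicator_of_notMem]
      intro hmem
      exact hx (mem_ordSet_succ_iff.mpr hmem)
  have mp : MeasurePreserving e volume
      ((volume : Measure ℝ).prod (volume : Measure (Fin n → ℝ))) := by
    have := measurePreserving_piFinSuccAbove (fun _ : Fin (n + 1) => (volume : Measure ℝ)) 0
    exact this
  calc F b (n + 1) t = ∫ x, (ordSet (n + 1) 0 t).indicator (P b (n + 1)) x := by
        rw [F, integral_indicator (isClosed_ordSet (n + 1) t).measurableSet]
    _ = ∫ x, T.indicator g (e x) := by simp_rw [key]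
    _ = ∫ p, T.indicator g p ∂((volume : Measure ℝ).prod volume) :=
        mp.integral_comp e.measurableEmbedding _
    _ = ∫ s, ∫ y, T.indicator g (s, y) := integral_prod _ hint
    _ = ∫ s, (Icc (0:ℝ) t).indicator (fun s => b (1 - s) * F b n s) s := by
        congr 1
        funext s
        by_cases hs : s ∈ Icc (0:ℝ) t
        · rw [indicator_of_mem hs]
          have : (fun y => T.indicator g (s, y)) =
              (ordSet n 0 s).indicator (fun y => b (1 - s) * P b n y) := by
            funext y
            by_cases hy : y ∈ ordSet n 0 s
            · rw [indicator_of_mem (show (s, y) ∈ T from ⟨⟨hs.1, hs.2⟩, hy⟩),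
                indicator_of_mem hy]
            · rw [indicator_of_notMem, indicator_of_notMem hy]
              exact fun hmem => hy hmem.2
          rw [this, integral_indicator (isClosed_ordSet n s).measurableSet]
          have hIntP : Integrable (P b n) (volume.restrict (ordSet n 0 s)) :=
            (continuous_P hb n).continuousOn.integrableOn_compact (isCompact_ordSet n s)
          exact ((ContinuousLinearMap.mul ℝ A (b (1 - s))).integral_comp_comm hIntP)
        · rw [indicator_of_notMem hs]
          have : (fun y => T.indicator g (s, y)) = fun _ => (0 : A) := by
            funext y
            rw [indicator_of_notMem]
            exact fun hmem => hs ⟨hmem.1.1, hmem.1.2⟩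
          rw [this, integral_zero]
    _ = ∫ s in Icc (0:ℝ) t, b (1 - s) * F b n s := by
        rw [integral_indicator measurableSet_Icc]
    _ = ∫ s in (0:ℝ)..t, b (1 - s) * F b n s := by
        rw [intervalIntegral.integral_of_le ht, integral_Icc_eq_integral_Ioc]

/-- FTC within `Icc 0 1` for a primitive of a function continuous on `Icc 0 1`. -/
lemma primitive_hasDerivWithinAt {f : ℝ → A} (hf : ContinuousOn f (Icc 0 1)) {t : ℝ}
    (ht : t ∈ Icc (0:ℝ) 1) :
    HasDerivWithinAt (fun u => ∫ x in (0:ℝ)..u, f x) (f t) (Icc 0 1) t := by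
  have hii : IntervalIntegrable f volume 0 t := by
    apply ContinuousOn.intervalIntegrable
    apply hf.mono
    rw [uIcc_of_le ht.1]
    exact Icc_subset_Icc le_rfl ht.2
  have hsm : AEStronglyMeasurable f (volume.restrict (Icc (0:ℝ) 1)) :=
    hf.aestronglyMeasurable measurableSet_Icc
  have hright : t < 1 → HasDerivWithinAt (fun u => ∫ x in (0:ℝ)..u, f x) (f t) (Ici t) t := by
    intro ht1
    have hmem : Icc (0:ℝ) 1 ∈ 𝓝[Ioi t] t := by
      have h1 : Iic (1:ℝ) ∈ 𝓝 t := Iic_mem_nhds ht1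
      have : Ioi t ∩ Iic 1 ∈ 𝓝[Ioi t] t :=
        Filter.inter_mem self_mem_nhdsWithin (mem_nhdsWithin_of_mem_nhds h1)
      exact Filter.mem_of_superset this fun x hx => ⟨le_trans ht.1 (le_of_lt hx.1), hx.2⟩
    refine intervalIntegral.integral_hasDerivWithinAt_right hii ⟨Icc 0 1, hmem, hsm⟩ ?_
    exact (hf t ht).mono_of_mem_nhdsWithin hmem
  have hleft : 0 < t → HasDerivWithinAt (fun u => ∫ x in (0:ℝ)..u, f x) (f t) (Iic t) t := by
    intro ht0
    have hmem : Icc (0:ℝ) 1 ∈ 𝓝[Iic t] t := by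
      have h1 : Ici (0:ℝ) ∈ 𝓝 t := Ici_mem_nhds ht0
      have : Iic t ∩ Ici 0 ∈ 𝓝[Iic t] t :=
        Filter.inter_mem self_mem_nhdsWithin (mem_nhdsWithin_of_mem_nhds h1)
      exact Filter.mem_of_superset this fun x hx => ⟨hx.2, le_trans hx.1 ht.2⟩
    refine intervalIntegral.integral_hasDerivWithinAt_right hii ⟨Icc 0 1, hmem, hsm⟩ ?_
    exact (hf t ht).mono_of_mem_nhdsWithin hmem
  rcases lt_or_eq_of_le ht.1 with h0 | h0
  · rcases lt_or_eq_of_le ht.2 with h1 | h1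
    · exact ((hright h1).union (hleft h0)).mono (by intro x hx; exact le_total t x)
    · exact (hleft h0).mono (fun x hx => hx.2.trans h1.ge)
  · exact (hright (by rw [← h0]; norm_num)).mono (fun x hx => h0 ▸ hx.1)

lemma F_bound (b : ℝ → A) (hb : Continuous b) {M : ℝ}
    (hMb : ∀ s ∈ Icc (0:ℝ) 1, ‖b s‖ ≤ M) :
    ∀ n, ∀ t ∈ Icc (0:ℝ) 1, ‖F b n t‖ ≤ ‖(1:A)‖ * (M ^ n * t ^ n / n.factorial) := by
  have hM : 0 ≤ M := le_trans (norm_nonneg _) (hMb 0 ⟨le_rfl, zero_le_one⟩)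
  intro n
  induction n with
  | zero => intro t ht; simp [F_zero]
  | succ n ih =>
    intro t ht
    rw [F_succ b hb n ht.1]
    set c : ℝ := M * (‖(1:A)‖ * (M ^ n / n.factorial)) with hc
    have hc0 : 0 ≤ c := by positivity
    have hbnd : ∀ s ∈ uIoc (0:ℝ) t, ‖b (1 - s) * F b n s‖ ≤ c * s ^ n := by
      intro s hs
      rw [uIoc_of_le ht.1] at hs
      have hs1 : s ∈ Icc (0:ℝ) 1 := ⟨hs.1.le, hs.2.trans ht.2⟩
      have h1s : (1 - s) ∈ Icc (0:ℝ) 1 := ⟨by linarith [hs1.2], by linarith [hs1.1]⟩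
      calc ‖b (1 - s) * F b n s‖ ≤ ‖b (1 - s)‖ * ‖F b n s‖ := norm_mul_le _ _
        _ ≤ M * (‖(1:A)‖ * (M ^ n * s ^ n / n.factorial)) :=
          mul_le_mul (hMb _ h1s) (ih s hs1) (norm_nonneg _) hM
        _ = c * s ^ n := by rw [hc]; ring
    have hgint : IntervalIntegrable (fun s : ℝ => c * s ^ n) volume 0 t :=
      (continuous_const.mul (continuous_pow n)).intervalIntegrable _ _
    have h1 : ‖∫ s in (0:ℝ)..t, b (1 - s) * F b n s‖ ≤ |∫ s in (0:ℝ)..t, c * s ^ n| := by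
      apply intervalIntegral.norm_integral_le_abs_of_norm_le _ hgint
      exact (ae_restrict_iff' measurableSet_uIoc).2 (Filter.Eventually.of_forall hbnd)
    refine h1.trans (le_of_eq ?_)
    rw [intervalIntegral.integral_const_mul, integral_pow]
    have h2 : c * ((t ^ (n + 1) - 0 ^ (n + 1)) / (n + 1)) =
        ‖(1:A)‖ * (M ^ (n + 1) * t ^ (n + 1) / (n + 1).factorial) := by
      rw [hc, Nat.factorial_succ]
      have hn : ((n:ℝ) + 1) ≠ 0 := by positivity
      have hf : ((n.factorial : ℝ)) ≠ 0 := by positivity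
      push_cast
      field_simp
      ring
    rw [h2, abs_of_nonneg (by have h0t := ht.1; positivity)]

lemma F_contOn (b : ℝ → A) (hb : Continuous b) : ∀ n, ContinuousOn (F b n) (Icc 0 1) := by
  intro n
  induction n with
  | zero =>
    exact continuousOn_const.congr fun t _ => F_zero b t
  | succ n ih =>
    have hg : ContinuousOn (fun s => b (1 - s) * F b n s) (Icc 0 1) :=
      ((hb.comp (continuous_const.sub continuous_id)).continuousOn).mul ih
    have hprim : ContinuousOn (fun u => ∫ x in (0:ℝ)..u, b (1 - x) * F b n x) (Icc 0 1) :=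
      fun t ht => (primitive_hasDerivWithinAt hg ht).continuousWithinAt
    exact hprim.congr fun t ht => F_succ b hb n ht.1

section Bounded

variable (b : ℝ → A) (hb : Continuous b) {M : ℝ}
  (hMb : ∀ s ∈ Icc (0:ℝ) 1, ‖b s‖ ≤ M)

include hb hMb

lemma summable_bound : Summable fun n : ℕ => ‖(1:A)‖ * (M ^ n / n.factorial) := by
  exact (Real.summable_pow_div_factorial M).mul_left _

lemma summable_norm_F : ∀ t ∈ Icc (0:ℝ) 1, Summable fun n => ‖F b n t‖ := by
  intro t ht
  refine Summable.of_nonneg_of_le (fun n => norm_nonneg _) (fun n => ?_)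
    (summable_bound b hb hMb)
  refine (F_bound b hb hMb n t ht).trans ?_
  have hM : 0 ≤ M := le_trans (norm_nonneg _) (hMb 0 ⟨le_rfl, zero_le_one⟩)
  have htn : t ^ n ≤ 1 := pow_le_one₀ ht.1 ht.2
  have : M ^ n * t ^ n / n.factorial ≤ M ^ n / n.factorial := by
    apply div_le_div_of_nonneg_right ?_ ?_ |>.trans_eq rfl
    · nlinarith [pow_nonneg hM n, pow_nonneg ht.1 n]
    · positivity
  nlinarith [norm_nonneg (1:A)]

lemma summable_norm_F_succ : ∀ t ∈ Icc (0:ℝ) 1, Summable fun n => ‖F b (n + 1) t‖ := by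
  intro t ht
  exact (summable_nat_add_iff 1).2 (summable_norm_F b hb hMb t ht)

lemma Hmap_eq_tsum : ∀ t ∈ Icc (0:ℝ) 1, Hmap b t = ∑' n, F b n t := by
  intro t ht
  have hs : Summable fun n => F b n t := (summable_norm_F b hb hMb t ht).of_norm
  rw [Summable.tsum_eq_zero_add hs, F_zero]
  rfl

lemma Hmap_int_eq : ∀ t ∈ Icc (0:ℝ) 1,
    Hmap b t = 1 + ∫ s in (0:ℝ)..t, b (1 - s) * Hmap b s := by
  intro t ht
  have hM : 0 ≤ M := le_trans (norm_nonneg _) (hMb 0 ⟨le_rfl, zero_le_one⟩)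
  have hFn_cont : ∀ n, ContinuousOn (fun s => b (1 - s) * F b n s) (Icc 0 1) := fun n =>
    ((hb.comp (continuous_const.sub continuous_id)).continuousOn).mul (F_contOn b hb n)
  have hFn_int : ∀ n : ℕ, Integrable (fun s => b (1 - s) * F b n s)
      (volume.restrict (Ioc 0 t)) := by
    intro n
    have : IntegrableOn (fun s => b (1 - s) * F b n s) (Icc 0 t) volume :=
      ((hFn_cont n).mono (Icc_subset_Icc le_rfl ht.2)).integrableOn_compact isCompact_Icc
    exact this.mono_set Ioc_subset_Icc_self
  have hsum_int : Summable fun n => ∫ s in Ioc (0:ℝ) t, ‖b (1 - s) * F b n s‖ := by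
    refine Summable.of_nonneg_of_le
      (fun n => integral_nonneg fun s => norm_nonneg _) (fun n => ?_)
      (((Real.summable_pow_div_factorial M).mul_left (M * ‖(1:A)‖)))
    have hbnd : ∀ s ∈ Ioc (0:ℝ) t, ‖b (1 - s) * F b n s‖ ≤ M * ‖(1:A)‖ * (M ^ n / n.factorial) := by
      intro s hs
      have hs1 : s ∈ Icc (0:ℝ) 1 := ⟨hs.1.le, hs.2.trans ht.2⟩
      have h1s : (1 - s) ∈ Icc (0:ℝ) 1 := ⟨by linarith [hs1.2], by linarith [hs1.1]⟩
      have hsn : s ^ n ≤ 1 := pow_le_one₀ hs1.1 hs1.2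
      calc ‖b (1 - s) * F b n s‖ ≤ ‖b (1 - s)‖ * ‖F b n s‖ := norm_mul_le _ _
        _ ≤ M * (‖(1:A)‖ * (M ^ n * s ^ n / n.factorial)) :=
          mul_le_mul (hMb _ h1s) (F_bound b hb hMb n s hs1) (norm_nonneg _) hM
        _ ≤ M * ‖(1:A)‖ * (M ^ n / n.factorial) := by
          have h1 : M ^ n * s ^ n / n.factorial ≤ M ^ n / n.factorial := by
            apply div_le_div_of_nonneg_right ?_ ?_ |>.trans_eq rfl
            · nlinarith [pow_nonneg hM n, pow_nonneg hs1.1 n]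
            · positivity
          have h2 : 0 ≤ M * ‖(1:A)‖ := mul_nonneg hM (norm_nonneg _)
          calc M * (‖(1:A)‖ * (M ^ n * s ^ n / n.factorial))
              = M * ‖(1:A)‖ * (M ^ n * s ^ n / n.factorial) := by ring
            _ ≤ M * ‖(1:A)‖ * (M ^ n / n.factorial) := mul_le_mul_of_nonneg_left h1 h2
    calc ∫ s in Ioc (0:ℝ) t, ‖b (1 - s) * F b n s‖
        ≤ ∫ _ in Ioc (0:ℝ) t, M * ‖(1:A)‖ * (M ^ n / n.factorial) := by
          apply setIntegral_mono_on (hFn_int n).norm (integrableOn_const ?_)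
            measurableSet_Ioc hbnd
          exact measure_Ioc_lt_top.ne
      _ = (volume (Ioc (0:ℝ) t)).toReal • (M * ‖(1:A)‖ * (M ^ n / n.factorial)) :=
          setIntegral_const _
      _ ≤ M * ‖(1:A)‖ * (M ^ n / n.factorial) := by
          rw [Real.volume_Ioc, smul_eq_mul]
          have h1 : (ENNReal.ofReal (t - 0)).toReal ≤ 1 := by
            rw [ENNReal.toReal_ofReal (by linarith [ht.1])]
            linarith [ht.2]
          nlinarith [norm_nonneg (1:A), pow_nonneg hM n, ENNReal.toReal_nonneg
            (a := ENNReal.ofReal (t - 0)), (Nat.cast_pos (α := ℝ)).mpr n.factorial_pos,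
            mul_nonneg (mul_nonneg hM (norm_nonneg (1:A)))
              (div_nonneg (pow_nonneg hM n) ((Nat.cast_pos (α := ℝ)).mpr n.factorial_pos).le)]
  have key : ∑' n, F b (n + 1) t = ∫ s in Ioc (0:ℝ) t, ∑' n, b (1 - s) * F b n s := by
    have h1 : ∀ n : ℕ, F b (n + 1) t = ∫ s in Ioc (0:ℝ) t, b (1 - s) * F b n s := by
      intro n
      rw [F_succ b hb n ht.1, intervalIntegral.integral_of_le ht.1]
    simp_rw [h1]
    exact integral_tsum_of_summable_integral_norm hFn_int hsum_int
  have key2 : ∀ s ∈ Ioc (0:ℝ) t, (∑' n, b (1 - s) * F b n s) = b (1 - s) * Hmap b s := by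
    intro s hs
    have hs1 : s ∈ Icc (0:ℝ) 1 := ⟨hs.1.le, hs.2.trans ht.2⟩
    rw [Hmap_eq_tsum b hb hMb s hs1]
    exact ((ContinuousLinearMap.mul ℝ A (b (1 - s))).map_tsum
      (summable_norm_F b hb hMb s hs1).of_norm).symm
  show (1 : A) + ∑' n, F b (n + 1) t = 1 + ∫ s in (0:ℝ)..t, b (1 - s) * Hmap b s
  rw [key, setIntegral_congr_fun measurableSet_Ioc key2,
    intervalIntegral.integral_of_le ht.1]

lemma Hmap_contOn : ContinuousOn (Hmap b) (Icc 0 1) := by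
  have hM : 0 ≤ M := le_trans (norm_nonneg _) (hMb 0 ⟨le_rfl, zero_le_one⟩)
  have : ContinuousOn (fun t => ∑' n : ℕ, F b (n + 1) t) (Icc 0 1) := by
    refine continuousOn_tsum (fun n => F_contOn b hb (n + 1))
      ((summable_nat_add_iff 1).2 (summable_bound b hb hMb)) (fun n t ht => ?_)
    refine (F_bound b hb hMb (n + 1) t ht).trans ?_
    have htn : t ^ (n + 1) ≤ 1 := pow_le_one₀ ht.1 ht.2
    have h1 : M ^ (n + 1) * t ^ (n + 1) / (n + 1).factorial ≤
        M ^ (n + 1) / (n + 1).factorial := by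
      apply div_le_div_of_nonneg_right ?_ ?_ |>.trans_eq rfl
      · nlinarith [pow_nonneg hM (n + 1), pow_nonneg ht.1 (n + 1)]
      · positivity
    nlinarith [norm_nonneg (1:A)]
  exact continuousOn_const.add this

lemma Hmap_hasDeriv : ∀ t ∈ Icc (0:ℝ) 1,
    HasDerivWithinAt (Hmap b) (b (1 - t) * Hmap b t) (Icc 0 1) t := by
  intro t ht
  have hg : ContinuousOn (fun s => b (1 - s) * Hmap b s) (Icc 0 1) :=
    ((hb.comp (continuous_const.sub continuous_id)).continuousOn).mul (Hmap_contOn b hb hMb)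
  have hprim := (primitive_hasDerivWithinAt hg ht).const_add (1 : A)
  exact hprim.congr (fun s hs => Hmap_int_eq b hb hMb s hs) (Hmap_int_eq b hb hMb t ht)

end Bounded

end Stmt10Aux

open Stmt10Aux in
theorem stmt10 {A : Type*} [NormedRing A] [NormedAlgebra ℝ A] [CompleteSpace A]
    (a : ℝ → A) (ha : ContinuousOn a (Set.Icc 0 1)) :
    (∀ t ∈ Set.Icc (0 : ℝ) 1, Summable fun n : ℕ =>
      ‖∫ x in ordSet (n + 1) 0 t, (List.ofFn fun i : Fin (n + 1) => a (1 - x i)).prod‖) ∧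
    Hmap a 0 = 1 ∧
    (∀ t ∈ Set.Icc (0 : ℝ) 1,
      HasDerivWithinAt (Hmap a) (a (1 - t) * Hmap a t) (Set.Icc 0 1) t) ∧
    (∀ X : ℝ → A, X 0 = 1 →
      (∀ t ∈ Set.Icc (0 : ℝ) 1, HasDerivWithinAt X (a (1 - t) * X t) (Set.Icc 0 1) t) →
      Hmap a 1 = X 1) := by
  classical
  -- continuous extension of `a`
  set b : ℝ → A := fun s => a ((projIcc (0:ℝ) 1 zero_le_one s : Icc (0:ℝ) 1) : ℝ) with hbdef
  have hb : Continuous b := by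
    apply ha.comp_continuous (continuous_subtype_val.comp continuous_projIcc)
    intro x
    exact (projIcc (0:ℝ) 1 zero_le_one x).2
  have hba : ∀ s ∈ Icc (0:ℝ) 1, b s = a s := by
    intro s hs
    simp [hbdef, projIcc_of_mem zero_le_one hs]
  -- bound
  obtain ⟨M, hMb⟩ : ∃ M, ∀ s ∈ Icc (0:ℝ) 1, ‖b s‖ ≤ M := by
    obtain ⟨M, hM⟩ := (isCompact_Icc.image_of_continuousOn hb.continuousOn).isBounded.exists_norm_le
    exact ⟨M, fun s hs => hM _ (mem_image_of_mem b hs)⟩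
  -- `F a` agrees with `F b` on `Icc 0 1`
  have hFab : ∀ n : ℕ, ∀ t ∈ Icc (0:ℝ) 1, F a n t = F b n t := by
    intro n t ht
    apply setIntegral_congr_fun (isClosed_ordSet n t).measurableSet
    intro x hx
    show (List.ofFn fun i : Fin n => a (1 - x i)).prod = (List.ofFn fun i => b (1 - x i)).prod
    have hfun : (fun i : Fin n => a (1 - x i)) = fun i => b (1 - x i) := by
      funext i
      have h1 : (1 - x i) ∈ Icc (0:ℝ) 1 :=
        ⟨by linarith [(hx.1 i).2, ht.2], by linarith [(hx.1 i).1]⟩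
      exact (hba _ h1).symm
    rw [hfun]
  have hHab : ∀ t ∈ Icc (0:ℝ) 1, Hmap a t = Hmap b t := by
    intro t ht
    show (1 : A) + ∑' n, F a (n + 1) t = (1 : A) + ∑' n, F b (n + 1) t
    congr 1
    exact tsum_congr fun n => hFab (n + 1) t ht
  refine ⟨?_, ?_, ?_, ?_⟩
  · -- summability
    intro t ht
    have : (fun n : ℕ => ‖F a (n + 1) t‖) = fun n => ‖F b (n + 1) t‖ := by
      funext n; rw [hFab (n + 1) t ht]
    exact this ▸ summable_norm_F_succ b hb hMb t ht
  · -- value at 0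
    have hnull : ∀ n : ℕ, (volume : Measure (Fin (n + 1) → ℝ)) (ordSet (n + 1) 0 0) = 0 := by
      intro n
      have hsub : ordSet (n + 1) 0 0 ⊆ {fun _ => (0:ℝ)} := by
        intro x hx
        have : ∀ i, x i = 0 := fun i => le_antisymm (hx.1 i).2 (hx.1 i).1
        simp only [mem_singleton_iff]
        funext i; exact this i
      refine measure_mono_null hsub ?_
      have : ({fun _ => (0:ℝ)} : Set (Fin (n + 1) → ℝ)) = Set.pi univ fun _ => {(0:ℝ)} := by
        ext x; simp [funext_iff]
      rw [this, volume_pi_pi]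
      simp
    show (1 : A) + ∑' n, F a (n + 1) 0 = 1
    have : ∀ n : ℕ, F a (n + 1) 0 = 0 := by
      intro n
      rw [F, Measure.restrict_eq_zero.mpr (hnull n), integral_zero_measure]
    simp [this]
  · -- derivative
    intro t ht
    have h1t : (1 - t) ∈ Icc (0:ℝ) 1 := ⟨by linarith [ht.2], by linarith [ht.1]⟩
    have := Hmap_hasDeriv b hb hMb t ht
    rw [← hba _ h1t, ← hHab t ht] at *
    exact this.congr (fun s hs => hHab s hs) (hHab t ht)
  · -- uniqueness
    intro X hX0 hX'
    have hM : 0 ≤ M := le_trans (norm_nonneg _) (hMb 0 ⟨le_rfl, zero_le_one⟩)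
    set v : ℝ → A → A := fun t x => b (1 - min 1 (max 0 t)) * x with hv
    have hvc : ∀ t : ℝ, (1 - min 1 (max 0 t)) ∈ Icc (0:ℝ) 1 := by
      intro t
      constructor
      · have : min 1 (max 0 t) ≤ 1 := min_le_left _ _
        linarith
      · have : (0:ℝ) ≤ min 1 (max 0 t) := le_min zero_le_one (le_max_left _ _)
        linarith
    have hlip : ∀ t : ℝ, LipschitzWith (Real.toNNReal M) (v t) := by
      intro t
      apply LipschitzWith.of_dist_le_mul
      intro x y
      rw [dist_eq_norm, dist_eq_norm, ← mul_sub]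
      calc ‖b (1 - min 1 (max 0 t)) * (x - y)‖
          ≤ ‖b (1 - min 1 (max 0 t))‖ * ‖x - y‖ := norm_mul_le _ _
        _ ≤ M * ‖x - y‖ :=
            mul_le_mul_of_nonneg_right (hMb _ (hvc t)) (norm_nonneg _)
        _ = (Real.toNNReal M : ℝ) * ‖x - y‖ := by rw [Real.coe_toNNReal M hM]
    have hvt : ∀ t ∈ Ico (0:ℝ) 1, ∀ z : A, v t z = a (1 - t) * z := by
      intro t ht' z
      have h1 : min 1 (max 0 t) = t := by
        rw [max_eq_right ht'.1, min_eq_right ht'.2.le]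
      have h2 : (1 - t) ∈ Icc (0:ℝ) 1 := ⟨by linarith [ht'.2.le], by linarith [ht'.1]⟩
      show b (1 - min 1 (max 0 t)) * z = a (1 - t) * z
      rw [h1, hba _ h2]
    -- derivatives within Ici t
    have hIci : ∀ (f : ℝ → A), (∀ t ∈ Icc (0:ℝ) 1,
        HasDerivWithinAt f (a (1 - t) * f t) (Icc 0 1) t) →
        ∀ t ∈ Ico (0:ℝ) 1, HasDerivWithinAt f (v t (f t)) (Ici t) t := by
      intro f hf t ht'
      have hmem : Icc (0:ℝ) 1 ∈ 𝓝[Ici t] t := by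
        have h1 : Iic (1:ℝ) ∈ 𝓝 t := Iic_mem_nhds ht'.2
        have : Ici t ∩ Iic 1 ∈ 𝓝[Ici t] t :=
          Filter.inter_mem self_mem_nhdsWithin (mem_nhdsWithin_of_mem_nhds h1)
        exact Filter.mem_of_superset this fun x hx => ⟨le_trans ht'.1 hx.1, hx.2⟩
      rw [hvt t ht']
      exact (hf t ⟨ht'.1, ht'.2.le⟩).mono_of_mem_nhdsWithin hmem
    have hHd : ∀ t ∈ Icc (0:ℝ) 1,
        HasDerivWithinAt (Hmap a) (a (1 - t) * Hmap a t) (Icc 0 1) t := by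
      intro t ht
      have h1t : (1 - t) ∈ Icc (0:ℝ) 1 := ⟨by linarith [ht.2], by linarith [ht.1]⟩
      have := Hmap_hasDeriv b hb hMb t ht
      rw [← hba _ h1t, ← hHab t ht] at *
      exact this.congr (fun s hs => hHab s hs) (hHab t ht)
    have hH0 : Hmap a 0 = 1 := by
      -- reuse: prove again quickly
      have hnull : ∀ n : ℕ, (volume : Measure (Fin (n + 1) → ℝ)) (ordSet (n + 1) 0 0) = 0 := by
        intro n
        have hsub : ordSet (n + 1) 0 0 ⊆ {fun _ => (0:ℝ)} := by
          intro x hx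
          have : ∀ i, x i = 0 := fun i => le_antisymm (hx.1 i).2 (hx.1 i).1
          simp only [mem_singleton_iff]
          funext i; exact this i
        refine measure_mono_null hsub ?_
        have : ({fun _ => (0:ℝ)} : Set (Fin (n + 1) → ℝ)) = Set.pi univ fun _ => {(0:ℝ)} := by
          ext x; simp [funext_iff]
        rw [this, volume_pi_pi]
        simp
      show (1 : A) + ∑' n, F a (n + 1) 0 = 1
      have : ∀ n : ℕ, F a (n + 1) 0 = 0 := by
        intro n
        rw [F, Measure.restrict_eq_zero.mpr (hnull n), integral_zero_measure]
      simp [this]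
    have heq := ODE_solution_unique_of_mem_Icc_right (v := v) (s := fun _ => univ)
      (K := Real.toNNReal M) (fun t _ => ((hlip t).lipschitzOnWith))
      (fun t ht => (hHd t ht).continuousWithinAt)
      (hIci (Hmap a) hHd)
      (fun _ _ => mem_univ _)
      (fun t ht => (hX' t ht).continuousWithinAt)
      (hIci X hX')
      (fun _ _ => mem_univ _)
      (by rw [hH0, hX0])
    exact heq ⟨zero_le_one, le_rfl⟩
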